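/- Let A be a C*-algebra, let Γ be a finite group, and let α be an action of Γ on A by *-automorphisms. Let A^α := {a ∈ A : α_g(a) = a for all g ∈ Γ} be the fixed point subalgebra. Suppose (h_n)_{n∈ℕ} is a sequence in A^α with 0 ≤ h_n and ‖h_n‖ ≤ 1 for all n, such that ‖h_n b − b‖ → 0 as n → ∞ for every b ∈ A^α. Then ‖h_n a − a‖ → 0 and ‖a h_n − a‖ → 0 as n → ∞ for every a ∈ A. (In other words, since Γ is finite, the inclusion A^α ⊆ A is nondegenerate: every approximate unit for A^α is an approximate unit for A.) -/

import Mathlib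

open Filter

lemma starAlgEquiv_map_nonneg {A : Type*} [NonUnitalNormedRing A] [StarRing A]
    [PartialOrder A] [StarOrderedRing A] [NormedSpace ℂ A] [IsScalarTower ℂ A A]
    [SMulCommClass ℂ A A] [StarModule ℂ A]
    (φ : A ≃⋆ₐ[ℂ] A) {x : A} (hx : 0 ≤ x) : 0 ≤ φ x := by
  rw [StarOrderedRing.nonneg_iff] at hx ⊢
  induction hx using AddSubmonoid.closure_induction with
  | mem y hy =>
    obtain ⟨s, rfl⟩ := hy
    exact AddSubmonoid.subset_closure ⟨φ s, by rw [map_mul, map_star]⟩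
  | zero => simpa using (AddSubmonoid.closure _).zero_mem
  | add y z _ _ hy hz => rw [map_add]; exact (AddSubmonoid.closure _).add_mem hy hz

theorem stmt2 {A : Type*} [NonUnitalNormedRing A] [StarRing A] [CStarRing A]
    [PartialOrder A] [StarOrderedRing A] [CompleteSpace A]
    [NormedSpace ℂ A] [IsScalarTower ℂ A A] [SMulCommClass ℂ A A] [StarModule ℂ A]
    {Γ : Type*} [Group Γ] [Finite Γ]
    (α : Γ → (A ≃⋆ₐ[ℂ] A))
    (hone : ∀ a : A, α 1 a = a)
    (hmul : ∀ g g' : Γ, ∀ a : A, α (g * g') a = α g (α g' a))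
    (h : ℕ → A)
    (hfix : ∀ n, ∀ g : Γ, α g (h n) = h n)
    (hpos : ∀ n, 0 ≤ h n)
    (hnorm : ∀ n, ‖h n‖ ≤ 1)
    (happrox : ∀ b : A, (∀ g : Γ, α g b = b) →
      Tendsto (fun n => ‖h n * b - b‖) atTop (nhds 0)) :
    ∀ a : A, Tendsto (fun n => ‖h n * a - a‖) atTop (nhds 0) ∧
      Tendsto (fun n => ‖a * h n - a‖) atTop (nhds 0) := by
  letI : NonUnitalCStarAlgebra A :=
    { ‹NonUnitalNormedRing A›, ‹StarRing A›, ‹CStarRing A›, ‹NormedSpace ℂ A›,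
      ‹IsScalarTower ℂ A A›, ‹SMulCommClass ℂ A A›, ‹StarModule ℂ A›,
      ‹CompleteSpace A› with }
  letI : Fintype Γ := Fintype.ofFinite Γ
  have hsa : ∀ n, star (h n) = h n := fun n => (hpos n).isSelfAdjoint.star_eq
  -- main half
  have main : ∀ a : A, Tendsto (fun n => ‖h n * a - a‖) atTop (nhds 0) := by
    intro a
    set p : A := a * star a with hp_def
    have hp : 0 ≤ p := mul_star_self_nonneg a
    set q : A := ∑ g : Γ, α g p with hq_def
    letI : DecidableEq Γ := Classical.decEq Γ
    have hq_fix : ∀ g' : Γ, α g' q = q := by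
      intro g'
      calc α g' q = ∑ g : Γ, α g' (α g p) := by rw [hq_def, map_sum]
        _ = ∑ g : Γ, α (g' * g) p := by
            refine Finset.sum_congr rfl fun g _ => ?_
            rw [hmul]
        _ = ∑ g : Γ, α g p := Fintype.sum_equiv (Equiv.mulLeft g') _ _ (fun g => by simp)
        _ = q := hq_def.symm
    have hqp : 0 ≤ q - p := by
      have hq2 : q = p + ∑ g ∈ Finset.univ.erase 1, α g p := by
        rw [hq_def, ← Finset.add_sum_erase _ _ (Finset.mem_univ (1 : Γ)), hone]
      rw [hq2, add_sub_cancel_left]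
      exact Finset.sum_nonneg fun g _ => starAlgEquiv_map_nonneg (α g) hp
    set s : A := CFC.sqrt (q - p) with hs_def
    have hs : 0 ≤ s := CFC.sqrt_nonneg (q - p)
    have hss : s * s = q - p := CFC.sqrt_mul_sqrt_self (q - p) hqp
    have hssa : star s = s := hs.isSelfAdjoint.star_eq
    -- key norm estimate
    have key : ∀ n, ‖h n * a - a‖ * ‖h n * a - a‖ ≤ 2 * ‖h n * q - q‖ := by
      intro n
      set hn : A := h n with hn_def
      set z : A := hn * a - a with hz_def
      set X : A := hn * p * hn - hn * p - p * hn + p with hX_def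
      set Y : A := hn * q * hn - hn * q - q * hn + q with hY_def
      have hzz : z * star z = X := by
        rw [hz_def, hX_def, hp_def, star_sub, star_mul, hsa n]
        noncomm_ring
      have hX0 : 0 ≤ X := by
        rw [← hzz]
        have := star_mul_self_nonneg (star z)
        rwa [star_star] at this
      have hXY : X ≤ Y := by
        rw [← sub_nonneg]
        set t : A := s * hn - s with ht_def
        have e1 : star t * t = hn * (s * s) * hn - hn * (s * s) - (s * s) * hn + (s * s) := by
          rw [ht_def, star_sub, star_mul, hssa, hsa n]
          noncomm_ring
        rw [hss] at e1
        have e2 : Y - X = hn * (q - p) * hn - hn * (q - p) - (q - p) * hn + (q - p) := by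
          rw [hX_def, hY_def]; noncomm_ring
        rw [e2, ← e1]
        exact star_mul_self_nonneg t
      have hnX : ‖z‖ * ‖z‖ = ‖X‖ := by rw [← hzz, CStarRing.norm_self_mul_star]
      have hXleY : ‖X‖ ≤ ‖Y‖ := CStarAlgebra.norm_le_norm_of_nonneg_of_le hX0 hXY
      have hYle : ‖Y‖ ≤ 2 * ‖hn * q - q‖ := by
        have : Y = (hn * q - q) * hn - (hn * q - q) := by rw [hY_def]; noncomm_ring
        rw [this]
        calc ‖(hn * q - q) * hn - (hn * q - q)‖
            ≤ ‖(hn * q - q) * hn‖ + ‖hn * q - q‖ := norm_sub_le _ _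
          _ ≤ ‖hn * q - q‖ * ‖hn‖ + ‖hn * q - q‖ := by
              gcongr; exact norm_mul_le _ _
          _ ≤ ‖hn * q - q‖ * 1 + ‖hn * q - q‖ := by
              gcongr; exact hnorm n
          _ = 2 * ‖hn * q - q‖ := by ring
      calc ‖z‖ * ‖z‖ = ‖X‖ := hnX
        _ ≤ ‖Y‖ := hXleY
        _ ≤ 2 * ‖hn * q - q‖ := hYle
    have hq_lim : Tendsto (fun n => 2 * ‖h n * q - q‖) atTop (nhds 0) := by
      have := (happrox q hq_fix).const_mul 2
      simpa using this
    have hsq : Tendsto (fun n => ‖h n * a - a‖ * ‖h n * a - a‖) atTop (nhds 0) :=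
      tendsto_of_tendsto_of_tendsto_of_le_of_le tendsto_const_nhds hq_lim
        (fun n => mul_nonneg (norm_nonneg _) (norm_nonneg _)) (fun n => key n)
    have := hsq.sqrt
    simpa [Real.sqrt_mul_self (norm_nonneg _)] using this
  intro a
  refine ⟨main a, ?_⟩
  have := main (star a)
  have heq : ∀ n, ‖a * h n - a‖ = ‖h n * star a - star a‖ := by
    intro n
    rw [← norm_star (a * h n - a), star_sub, star_mul, hsa n]
  simpa [heq] using this
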